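/- For finite classical random variables (U,V) with n-fold iid copies (Uⁿ,Vⁿ), and any ε ∈ (0,1): lim_{n→∞} (1/n) I_∞^ε[Uⁿ;Vⁿ] = I[U;V], where I[U;V] is the Shannon mutual information. -/

import Mathlib

open Finset

/-- The n-fold iid product of a joint pmf `p` on `U × V`. -/
noncomputable def iidJoint {U V : Type*} (p : U × V → ℝ) (n : ℕ) :
    (Fin n → U) × (Fin n → V) → ℝ :=
  fun x => ∏ i, p (x.1 i, x.2 i)

/-- The smooth max Rényi divergence `I_∞^ε`, expressed as the infimum of all
exponents `λ` admitting a set `𝒢` with `p(𝒢) > 1 - ε` on which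
`p(u,v) ≤ 2^λ p_U(u) p_V(v)` (with `p_U, p_V` the marginals of `p`). -/
noncomputable def ImaxSmooth {U V : Type*} [Fintype U] [Fintype V]
    (p : U × V → ℝ) (ε : ℝ) : ℝ :=
  sInf {lam : ℝ | ∃ G : Finset (U × V),
    1 - ε < ∑ x ∈ G, p x ∧
    ∀ x ∈ G, p x ≤ (2 : ℝ) ^ lam * ((∑ v, p (x.1, v)) * (∑ u, p (u, x.2)))}

section Aux
variable {S : Type*} [Fintype S]

lemma sum_prod_swap (n : ℕ) (h : Fin n → S → ℝ) :
    ∑ ω : Fin n → S, ∏ i, h i (ω i) = ∏ i, ∑ s, h i s :=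
  (Fintype.prod_sum h).symm

lemma iid_E_one (p : S → ℝ) (hp1 : ∑ s, p s = 1) (n : ℕ) :
    ∑ ω : Fin n → S, ∏ i, p (ω i) = 1 := by
  rw [sum_prod_swap n (fun _ s => p s)]
  simp [hp1]

lemma iid_E_coord (p : S → ℝ) (hp1 : ∑ s, p s = 1) (n : ℕ) (g : S → ℝ) (i : Fin n) :
    ∑ ω : Fin n → S, (∏ j, p (ω j)) * g (ω i) = ∑ s, p s * g s := by
  classical
  have h1 : ∀ ω : Fin n → S,
      (∏ j, p (ω j)) * g (ω i) = ∏ j, (p (ω j) * if j = i then g (ω j) else 1) := by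
    intro ω
    rw [Finset.prod_mul_distrib, Finset.prod_ite_eq' univ i (fun j => g (ω j))]
    simp
  rw [Finset.sum_congr rfl fun ω _ => h1 ω,
    sum_prod_swap n (fun j s => p s * if j = i then g s else 1)]
  have h2 : ∀ j : Fin n, (∑ s, (p s * if j = i then g s else 1))
      = if j = i then (∑ s, p s * g s) else 1 := by
    intro j
    by_cases h : j = i <;> simp [h, hp1]
  rw [Finset.prod_congr rfl fun j _ => h2 j,
    Finset.prod_ite_eq' univ i (fun _ => ∑ s, p s * g s)]
  simp

lemma iid_E_coord2 (p : S → ℝ) (hp1 : ∑ s, p s = 1) (n : ℕ) (g : S → ℝ) (i j : Fin n)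
    (hij : i ≠ j) :
    ∑ ω : Fin n → S, (∏ k, p (ω k)) * (g (ω i) * g (ω j))
      = (∑ s, p s * g s) * (∑ s, p s * g s) := by
  classical
  have h1 : ∀ ω : Fin n → S,
      (∏ k, p (ω k)) * (g (ω i) * g (ω j))
        = ∏ k, (p (ω k) * ((if k = i then g (ω k) else 1) * (if k = j then g (ω k) else 1))) := by
    intro ω
    rw [Finset.prod_mul_distrib, Finset.prod_mul_distrib,
      Finset.prod_ite_eq' univ i (fun k => g (ω k)),
      Finset.prod_ite_eq' univ j (fun k => g (ω k))]
    simp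
  rw [Finset.sum_congr rfl fun ω _ => h1 ω,
    sum_prod_swap n (fun k s => p s * ((if k = i then g s else 1) * (if k = j then g s else 1)))]
  have h2 : ∀ k : Fin n,
      (∑ s, p s * ((if k = i then g s else 1) * (if k = j then g s else 1)))
        = (if k = i then (∑ s, p s * g s) else 1) * (if k = j then (∑ s, p s * g s) else 1) := by
    intro k
    by_cases hki : k = i
    · subst hki
      simp [hij]
    · by_cases hkj : k = j
      · subst hkj
        simp [hki]
      · simp [hki, hkj, hp1]
  rw [Finset.prod_congr rfl fun k _ => h2 k, Finset.prod_mul_distrib,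
    Finset.prod_ite_eq' univ i (fun _ => ∑ s, p s * g s),
    Finset.prod_ite_eq' univ j (fun _ => ∑ s, p s * g s)]
  simp


lemma iid_E_lin (p : S → ℝ) (hp1 : ∑ s, p s = 1) (n : ℕ) (g : S → ℝ) :
    ∑ ω : Fin n → S, (∏ j, p (ω j)) * (∑ i, g (ω i)) = n * ∑ s, p s * g s := by
  have h : ∀ ω : Fin n → S, (∏ j, p (ω j)) * (∑ i, g (ω i))
      = ∑ i, (∏ j, p (ω j)) * g (ω i) := fun ω => Finset.mul_sum _ _ _
  rw [Finset.sum_congr rfl fun ω _ => h ω, Finset.sum_comm,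
    Finset.sum_congr rfl fun i _ => iid_E_coord p hp1 n g i]
  simp [mul_comm]

lemma iid_E_sq (p : S → ℝ) (hp1 : ∑ s, p s = 1) (n : ℕ) (g : S → ℝ) :
    ∑ ω : Fin n → S, (∏ j, p (ω j)) * (∑ i, g (ω i)) ^ 2
      = n * (∑ s, p s * (g s * g s))
        + ((n : ℝ) ^ 2 - n) * ((∑ s, p s * g s) * (∑ s, p s * g s)) := by
  classical
  have h : ∀ ω : Fin n → S, (∏ j, p (ω j)) * (∑ i, g (ω i)) ^ 2
      = ∑ i, ∑ j, (∏ k, p (ω k)) * (g (ω i) * g (ω j)) := by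
    intro ω
    rw [sq, Finset.sum_mul_sum]
    rw [Finset.mul_sum]
    exact Finset.sum_congr rfl fun i _ => Finset.mul_sum _ _ _
  rw [Finset.sum_congr rfl fun ω _ => h ω, Finset.sum_comm]
  have h2 : ∀ i : Fin n, ∑ ω : Fin n → S, ∑ j : Fin n, (∏ k, p (ω k)) * (g (ω i) * g (ω j))
      = n * ((∑ s, p s * g s) * (∑ s, p s * g s))
        + ((∑ s, p s * (g s * g s)) - (∑ s, p s * g s) * (∑ s, p s * g s)) := by
    intro i
    rw [Finset.sum_comm]
    have h3 : ∀ j : Fin n, ∑ ω : Fin n → S, (∏ k, p (ω k)) * (g (ω i) * g (ω j))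
        = (∑ s, p s * g s) * (∑ s, p s * g s)
          + (if i = j then (∑ s, p s * (g s * g s)) - (∑ s, p s * g s) * (∑ s, p s * g s)
             else 0) := by
      intro j
      by_cases hij : i = j
      · subst hij
        rw [if_pos rfl, iid_E_coord p hp1 n (fun s => g s * g s) i]
        ring
      · rw [if_neg hij, iid_E_coord2 p hp1 n g i j hij]
        ring
    rw [Finset.sum_congr rfl fun j _ => h3 j, Finset.sum_add_distrib,
      Finset.sum_ite_eq univ i
        (fun _ => (∑ s, p s * (g s * g s)) - (∑ s, p s * g s) * (∑ s, p s * g s))]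
    simp
  rw [Finset.sum_congr rfl fun i _ => h2 i]
  simp only [Finset.sum_const, card_univ, Fintype.card_fin, nsmul_eq_mul]
  ring

lemma cheb {Ω : Type*} [Fintype Ω] (w T : Ω → ℝ) (hw : ∀ ω, 0 ≤ w ω)
    (h0 : ∑ ω, w ω = 1) (μ E2 t : ℝ) (ht : 0 < t)
    (h1 : ∑ ω, w ω * T ω = μ) (h2 : ∑ ω, w ω * T ω ^ 2 = E2)
    (B : Finset Ω) (hB : ∀ ω ∈ B, t ≤ |T ω - μ|) :
    ∑ ω ∈ B, w ω ≤ (E2 - μ ^ 2) / t ^ 2 := by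
  rw [le_div_iff₀ (pow_pos ht 2)]
  have hE : ∑ ω, w ω * (T ω - μ) ^ 2 = E2 - μ ^ 2 := by
    have hpt : ∀ ω, w ω * (T ω - μ) ^ 2
        = w ω * T ω ^ 2 - 2 * μ * (w ω * T ω) + μ ^ 2 * w ω := fun ω => by ring
    rw [Finset.sum_congr rfl fun ω _ => hpt ω, Finset.sum_add_distrib,
      Finset.sum_sub_distrib, ← Finset.mul_sum, ← Finset.mul_sum, h0, h1, h2]
    ring
  calc (∑ ω ∈ B, w ω) * t ^ 2 = ∑ ω ∈ B, w ω * t ^ 2 := by rw [Finset.sum_mul]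
    _ ≤ ∑ ω ∈ B, w ω * (T ω - μ) ^ 2 := by
        refine Finset.sum_le_sum fun ω hω => ?_
        refine mul_le_mul_of_nonneg_left ?_ (hw ω)
        calc t ^ 2 ≤ |T ω - μ| ^ 2 := pow_le_pow_left₀ ht.le (hB ω hω) 2
          _ = (T ω - μ) ^ 2 := sq_abs _
    _ ≤ ∑ ω, w ω * (T ω - μ) ^ 2 :=
        Finset.sum_le_sum_of_subset_of_nonneg (Finset.subset_univ B)
          (fun ω _ _ => mul_nonneg (hw ω) (sq_nonneg _))
    _ = E2 - μ ^ 2 := hE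


end Aux

lemma key_bounds {X : Type*} [Fintype X] (P T Q : X → ℝ) (ε t μ C : ℝ)
    (ht : 0 < t)
    (hP0 : ∀ x, 0 ≤ P x) (hQ0 : ∀ x, 0 ≤ Q x)
    (hsplit : ∀ x, 0 < P x → 0 < Q x ∧ P x = 2 ^ T x * Q x)
    (hE1 : ∑ x, P x = 1)
    (hcheb : ∀ B : Finset X, (∀ x ∈ B, t ≤ |T x - μ|) → ∑ x ∈ B, P x ≤ C)
    (hCε : C < ε) (hCε' : C < 1 - ε) :
    (μ + t) ∈ {lam : ℝ | ∃ G : Finset X,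
        1 - ε < ∑ x ∈ G, P x ∧ ∀ x ∈ G, P x ≤ 2 ^ lam * Q x}
    ∧ ∀ lam ∈ {lam : ℝ | ∃ G : Finset X,
        1 - ε < ∑ x ∈ G, P x ∧ ∀ x ∈ G, P x ≤ 2 ^ lam * Q x},
        μ - t ≤ lam := by
  classical
  constructor
  · set G := univ.filter (fun x => P x ≤ 2 ^ (μ + t) * Q x) with hG
    refine ⟨G, ?_, fun x hx => (Finset.mem_filter.mp hx).2⟩
    have hcomp : ∀ x ∈ univ \ G, t ≤ |T x - μ| := by
      intro x hx
      have hxG : ¬ (P x ≤ 2 ^ (μ + t) * Q x) := by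
        have := (Finset.mem_sdiff.mp hx).2
        simpa [hG, Finset.mem_filter] using this
      push_neg at hxG
      have hPx : 0 < P x :=
        lt_of_le_of_lt (mul_nonneg (Real.rpow_nonneg (by norm_num) _) (hQ0 x)) hxG
      obtain ⟨hQx, heq⟩ := hsplit x hPx
      rw [heq] at hxG
      have h2 : (2 : ℝ) ^ (μ + t) < 2 ^ T x := (mul_lt_mul_iff_of_pos_right hQx).mp hxG
      have h3 : μ + t < T x := (Real.rpow_lt_rpow_left_iff one_lt_two).mp h2
      exact (by linarith : t ≤ T x - μ).trans (le_abs_self _)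
    have hbad : ∑ x ∈ univ \ G, P x ≤ C := hcheb _ hcomp
    have hGsum : ∑ x ∈ univ \ G, P x + ∑ x ∈ G, P x = 1 := by
      rw [Finset.sum_sdiff (Finset.subset_univ G), hE1]
    linarith
  · intro lam hlam
    obtain ⟨G, hG1, hG2⟩ := hlam
    set A' := univ.filter (fun x => 0 < P x ∧ |T x - μ| < t) with hA'
    have hAbarle : ∑ x ∈ univ \ A', P x ≤ C := by
      rw [← Finset.sum_filter_add_sum_filter_not (univ \ A') (fun x => 0 < P x) P]
      have hz : ∑ x ∈ (univ \ A').filter (fun x => ¬ 0 < P x), P x = 0 := by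
        refine Finset.sum_eq_zero fun x hx => ?_
        have := (Finset.mem_filter.mp hx).2
        exact le_antisymm (not_lt.mp this) (hP0 x)
      rw [hz, add_zero]
      refine hcheb _ fun x hx => ?_
      obtain ⟨hx1, hx2⟩ := Finset.mem_filter.mp hx
      have hxA : x ∉ A' := (Finset.mem_sdiff.mp hx1).2
      have : ¬ (0 < P x ∧ |T x - μ| < t) := by
        intro h; exact hxA (Finset.mem_filter.mpr ⟨Finset.mem_univ x, h⟩)
      push_neg at this
      exact not_lt.mp (fun h => absurd (this hx2) (not_le.mpr h))
    have hA'sum : 1 - C ≤ ∑ x ∈ A', P x := by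
      have := Finset.sum_sdiff (Finset.subset_univ A') (f := P)
      rw [hE1] at this
      linarith
    have hunion : ∑ x ∈ G ∪ A', P x ≤ 1 := by
      rw [← hE1]
      exact Finset.sum_le_sum_of_subset_of_nonneg (Finset.subset_univ _) fun x _ _ => hP0 x
    have hinter : 0 < ∑ x ∈ G ∩ A', P x := by
      have h := Finset.sum_union_inter (s₁ := G) (s₂ := A') (f := P)
      linarith
    have hne : (G ∩ A').Nonempty := by
      rcases Finset.eq_empty_or_nonempty (G ∩ A') with h | h
      · rw [h] at hinter; simp at hinter
      · exact h
    obtain ⟨x, hx⟩ := hne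
    obtain ⟨hxG, hxA⟩ := Finset.mem_inter.mp hx
    obtain ⟨hPx, hTx⟩ := (Finset.mem_filter.mp hxA).2
    obtain ⟨hQx, heq⟩ := hsplit x hPx
    have h1 := hG2 x hxG
    rw [heq] at h1
    have h2 : T x ≤ lam := (Real.rpow_le_rpow_left_iff one_lt_two).mp
      ((mul_le_mul_iff_of_pos_right hQx).mp h1)
    have h3 := abs_lt.mp hTx
    linarith [h3.1]

/-- Asymptotic iid convergence of the smooth max Rényi divergence to the
Shannon mutual information: `(1/n) I_∞^ε[Uⁿ;Vⁿ] → I[U;V]` for any `ε ∈ (0,1)`. -/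
theorem smooth_max_renyi_div_iid_limit
    {U V : Type*} [Fintype U] [Fintype V]
    (p : U × V → ℝ) (hp0 : ∀ x, 0 ≤ p x) (hp1 : ∑ x, p x = 1)
    (ε : ℝ) (hε0 : 0 < ε) (hε1 : ε < 1) :
    Filter.Tendsto (fun n : ℕ => ImaxSmooth (iidJoint p n) ε / n)
      Filter.atTop
      (nhds (∑ x : U × V, p x *
        Real.logb 2 (p x / ((∑ v, p (x.1, v)) * (∑ u, p (u, x.2)))))) := by
  classical
  set q : U × V → ℝ := fun s => (∑ v, p (s.1, v)) * (∑ u, p (u, s.2)) with hq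
  set f : U × V → ℝ := fun s => if p s = 0 then 0 else Real.logb 2 (p s / q s) with hf
  set M : ℝ := ∑ s, p s * f s with hM
  set A : ℝ := ∑ s, p s * (f s * f s) with hA
  have hq0 : ∀ s, 0 ≤ q s := fun s =>
    mul_nonneg (Finset.sum_nonneg fun v _ => hp0 _) (Finset.sum_nonneg fun u _ => hp0 _)
  have hqpos : ∀ s : U × V, 0 < p s → 0 < q s := by
    intro s hs
    have h1 : p s ≤ ∑ v, p (s.1, v) := by
      have := Finset.single_le_sum (f := fun v => p (s.1, v))
        (fun v _ => hp0 _) (Finset.mem_univ s.2)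
      simpa using this
    have h2 : p s ≤ ∑ u, p (u, s.2) := by
      have := Finset.single_le_sum (f := fun u => p (u, s.2))
        (fun u _ => hp0 _) (Finset.mem_univ s.1)
      simpa using this
    exact mul_pos (lt_of_lt_of_le hs h1) (lt_of_lt_of_le hs h2)
  have hpf : ∀ s, 0 < p s → p s = 2 ^ (f s) * q s := by
    intro s hs
    have hqs := hqpos s hs
    have hfs : f s = Real.logb 2 (p s / q s) := by
      simp only [hf]; rw [if_neg hs.ne']
    rw [hfs, Real.rpow_logb (by norm_num) (by norm_num) (div_pos hs hqs),
      div_mul_cancel₀ _ hqs.ne']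
  have hgoal : (∑ x : U × V, p x *
      Real.logb 2 (p x / ((∑ v, p (x.1, v)) * (∑ u, p (u, x.2))))) = M := by
    rw [hM]
    refine Finset.sum_congr rfl fun s _ => ?_
    by_cases hs : p s = 0
    · simp [hs]
    · simp only [hf, if_neg hs, hq]
  rw [hgoal, Metric.tendsto_atTop]
  intro δ hδ
  have hδ'0 : 0 < δ / 2 := half_pos hδ
  have hTend : Filter.Tendsto (fun n : ℕ => (A - M * M) / (δ / 2) ^ 2 * (1 / n))
      Filter.atTop (nhds 0) := by
    simpa using (tendsto_one_div_atTop_nhds_zero_nat (𝕜 := ℝ)).const_mul ((A - M * M) / (δ / 2) ^ 2)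
  have hsmall := hTend.eventually_lt_const (lt_min hε0 (by linarith : (0:ℝ) < 1 - ε))
  obtain ⟨N, hN⟩ := Filter.eventually_atTop.mp (hsmall.and (Filter.eventually_ge_atTop 1))
  refine ⟨N, fun n hn => ?_⟩
  obtain ⟨hCsm, hn1⟩ := hN n hn
  have hn0 : (0 : ℝ) < n := by exact_mod_cast Nat.lt_of_lt_of_le Nat.zero_lt_one hn1
  set X := (Fin n → U) × (Fin n → V) with hX
  set P : X → ℝ := iidJoint p n with hP
  set T : X → ℝ := fun x => ∑ i, f (x.1 i, x.2 i) with hT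
  set Q : X → ℝ := fun x => ∏ i, q (x.1 i, x.2 i) with hQdef
  have hP0 : ∀ x, 0 ≤ P x := fun x => Finset.prod_nonneg fun i _ => hp0 _
  have hQ0 : ∀ x, 0 ≤ Q x := fun x => Finset.prod_nonneg fun i _ => hq0 _
  have hmarg : ∀ x : X, (∑ v, P (x.1, v)) * (∑ u, P (u, x.2)) = Q x := by
    intro x
    have h1 : (∑ v : Fin n → V, P (x.1, v)) = ∏ i, ∑ b, p (x.1 i, b) :=
      sum_prod_swap n (fun i b => p (x.1 i, b))
    have h2 : (∑ u : Fin n → U, P (u, x.2)) = ∏ i, ∑ a, p (a, x.2 i) :=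
      sum_prod_swap n (fun i a => p (a, x.2 i))
    rw [h1, h2, ← Finset.prod_mul_distrib]
  have hsplit : ∀ x, 0 < P x → 0 < Q x ∧ P x = 2 ^ T x * Q x := by
    intro x hx
    have hcoord : ∀ i, 0 < p (x.1 i, x.2 i) := by
      intro i
      rcases lt_or_eq_of_le (hp0 (x.1 i, x.2 i)) with h | h
      · exact h
      · exfalso
        have hPz : P x = 0 := Finset.prod_eq_zero (Finset.mem_univ i) h.symm
        rw [hPz] at hx; exact lt_irrefl 0 hx
    refine ⟨Finset.prod_pos fun i _ => hqpos _ (hcoord i), ?_⟩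
    calc P x = ∏ i, p (x.1 i, x.2 i) := rfl
      _ = ∏ i, ((2 : ℝ) ^ (f (x.1 i, x.2 i)) * q (x.1 i, x.2 i)) :=
          Finset.prod_congr rfl fun i _ => hpf _ (hcoord i)
      _ = (∏ i, (2 : ℝ) ^ (f (x.1 i, x.2 i))) * Q x := Finset.prod_mul_distrib
      _ = 2 ^ T x * Q x := by
          rw [hT, ← Real.rpow_sum_of_pos (by norm_num : (0:ℝ) < 2)
            (fun i => f (x.1 i, x.2 i)) univ]
  have e := Equiv.arrowProdEquivProdArrow (Fin n) (fun _ => U) (fun _ => V)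
  have hE1 : ∑ x : X, P x = 1 := by
    rw [← Equiv.sum_comp (Equiv.arrowProdEquivProdArrow (Fin n) (fun _ => U) (fun _ => V)) P]
    exact iid_E_one p hp1 n
  have hE2 : ∑ x : X, P x * T x = n * M := by
    rw [hM, ← Equiv.sum_comp (Equiv.arrowProdEquivProdArrow (Fin n) (fun _ => U) (fun _ => V))
      (fun x => P x * T x)]
    exact iid_E_lin p hp1 n f
  have hE3 : ∑ x : X, P x * T x ^ 2 = n * A + ((n : ℝ) ^ 2 - n) * (M * M) := by
    rw [hM, hA, ← Equiv.sum_comp (Equiv.arrowProdEquivProdArrow (Fin n) (fun _ => U) (fun _ => V))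
      (fun x => P x * T x ^ 2)]
    exact iid_E_sq p hp1 n f
  have hnne : (n : ℝ) ≠ 0 := hn0.ne'
  have hcheb : ∀ B : Finset X, (∀ x ∈ B, (n : ℝ) * (δ / 2) ≤ |T x - n * M|) →
      ∑ x ∈ B, P x ≤ (A - M * M) / (δ / 2) ^ 2 * (1 / n) := by
    intro B hB
    have h := cheb P T hP0 hE1 (n * M) (n * A + ((n : ℝ) ^ 2 - n) * (M * M))
      ((n : ℝ) * (δ / 2)) (by positivity) hE2 hE3 B hB
    refine h.trans (le_of_eq ?_)
    field_simp
    ring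
  obtain ⟨hupper, hlower⟩ := key_bounds P T Q ε ((n : ℝ) * (δ / 2)) ((n : ℝ) * M)
    ((A - M * M) / (δ / 2) ^ 2 * (1 / n)) (by positivity) hP0 hQ0 hsplit hE1 hcheb
    (hCsm.trans_le (min_le_left _ _)) (hCsm.trans_le (min_le_right _ _))
  have hIm : ImaxSmooth (iidJoint p n) ε
      = sInf {lam : ℝ | ∃ G : Finset X,
          1 - ε < ∑ x ∈ G, P x ∧ ∀ x ∈ G, P x ≤ 2 ^ lam * Q x} := by
    simp only [ImaxSmooth, hP]
    congr 1
    ext lam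
    refine exists_congr fun G => and_congr_right fun _ => forall₂_congr fun x _ => ?_
    rw [hmarg x]
  have hbdd : BddBelow {lam : ℝ | ∃ G : Finset X,
      1 - ε < ∑ x ∈ G, P x ∧ ∀ x ∈ G, P x ≤ 2 ^ lam * Q x} :=
    ⟨(n : ℝ) * M - (n : ℝ) * (δ / 2), fun lam hlam => hlower lam hlam⟩
  have hup' : sInf {lam : ℝ | ∃ G : Finset X,
      1 - ε < ∑ x ∈ G, P x ∧ ∀ x ∈ G, P x ≤ 2 ^ lam * Q x}
        ≤ (n : ℝ) * M + (n : ℝ) * (δ / 2) := csInf_le hbdd hupper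
  have hlo' : (n : ℝ) * M - (n : ℝ) * (δ / 2) ≤ sInf {lam : ℝ | ∃ G : Finset X,
      1 - ε < ∑ x ∈ G, P x ∧ ∀ x ∈ G, P x ≤ 2 ^ lam * Q x} :=
    le_csInf ⟨_, hupper⟩ hlower
  rw [Real.dist_eq, hIm, abs_lt]
  set I := sInf {lam : ℝ | ∃ G : Finset X,
      1 - ε < ∑ x ∈ G, P x ∧ ∀ x ∈ G, P x ≤ 2 ^ lam * Q x}
  have hd1 : M - δ / 2 ≤ I / n := by
    rw [le_div_iff₀ hn0]
    have : (M - δ / 2) * n = (n : ℝ) * M - (n : ℝ) * (δ / 2) := by ring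
    linarith
  have hd2 : I / n ≤ M + δ / 2 := by
    rw [div_le_iff₀ hn0]
    have : (M + δ / 2) * n = (n : ℝ) * M + (n : ℝ) * (δ / 2) := by ring
    linarith
  constructor
  · linarith
  · linarith
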